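/- Let G be a countably infinite group, (F_n) a left Følner sequence in G, H a compact metrizable topological group with normalized Haar probability measure ν, τ : G → H an injective group homomorphism with dense image, and W ⊆ H a Borel set with ν(∂W) = 0. Fix ξ ∈ H, and suppose x, y : G → {0,1} both satisfy the sandwich condition: for all g ∈ G, if τ(g)ξ ∈ interior(W) then the value at g is 1, and if the value at g is 1 then τ(g)ξ ∈ W. Then D_F(x,y) = 0, i.e. limsup_{n→∞} (1/#F_n) · #{g ∈ F_n : x(g) ≠ y(g)} = 0. -/

import Mathlib

open MeasureTheory Filter Set Topology
open scoped symmDiff ENNReal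

/-- Extended logarithm of an `ℝ≥0∞` value, with `eLog 0 = ⊥` and `eLog ⊤ = ⊤`. -/
noncomputable def eLog (x : ℝ≥0∞) : EReal :=
  if x = 0 then ⊥ else if x = ⊤ then ⊤ else ((Real.log x.toReal : ℝ) : EReal)

/-- Maximal cardinality (in `ℝ≥0∞`) of an `ε`-separated subset of `S` w.r.t. `d`. -/
noncomputable def sepCount {Z : Type*} (S : Set Z) (d : Z → Z → ℝ) (ε : ℝ) : ℝ≥0∞ :=
  ⨆ (A : Finset Z) (_ : ↑A ⊆ S ∧ (A : Set Z).Pairwise fun z z' => ε ≤ d z z'), (A.card : ℝ≥0∞)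

/-- The quantity `log Sep(S, d, ε) / (- log ε)`, as an extended real. -/
noncomputable def acRatio {Z : Type*} (S : Set Z) (d : Z → Z → ℝ) (ε : ℝ) : EReal :=
  eLog (sepCount S d ε) * (((-Real.log ε)⁻¹ : ℝ) : EReal)

open Classical in
/-- `F` is a left Følner sequence in the group `G`. -/
def IsFolner {G : Type*} [Group G] (F : ℕ → Finset G) : Prop :=
  (∀ n, (F n).Nonempty) ∧ ∀ g : G,
    Filter.Tendsto
      (fun n => ((((F n).image fun h => g * h) ∆ F n).card : ℝ) / ((F n).card : ℝ))
      Filter.atTop (nhds 0)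

/-- The Besicovitch pseudometric w.r.t. the sequence `F`. -/
noncomputable def besicovitchDist {G : Type*} (F : ℕ → Finset G) (x y : G → Bool) : ℝ :=
  Filter.limsup (fun n => (((F n).filter fun g => x g ≠ y g).card : ℝ) / ((F n).card : ℝ))
    Filter.atTop

open Classical in
/-- The symbolic model set (as a 0-1 array) associated to a window `W ⊆ H`. -/
noncomputable def modelSet {G H : Type*} (τ : G → H) (W : Set H) : G → Bool :=
  fun g => decide (τ g ∈ W)

/-- Orbit closure of `x` under the left shift `(g·x)(h) = x(hg)`, in the product topology. -/
def shiftOrbitClosure {G : Type*} [Group G] (x : G → Bool) : Set (G → Bool) :=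
  closure { y : G → Bool | ∃ g : G, y = fun h => x (h * g) }

/-- `Per(x, Γ, α)`, the set of `Γ`-periodic positions of `x` with value `α`. -/
def perA {G : Type*} [Group G] (x : G → Bool) (Γ : Subgroup G) (α : Bool) : Set G :=
  { g : G | ∀ γ ∈ Γ, x (g * γ) = α }

/-- `Per(x, Γ) = Per(x,Γ,0) ∪ Per(x,Γ,1)`. -/
def perSet {G : Type*} [Group G] (x : G → Bool) (Γ : Subgroup G) : Set G :=
  perA x Γ false ∪ perA x Γ true

/-- `E` is a fundamental domain of `G/Γ`: `g ↦ gΓ` is a bijection from `E` onto `G/Γ`. -/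
def IsFundDom {G : Type*} [Group G] (Γ : Subgroup G) (E : Finset G) : Prop :=
  ∀ g : G, ∃! d, d ∈ E ∧ g⁻¹ * d ∈ Γ

/-- The density `D(x,Γ)` of `Per(x,Γ)` computed in a fundamental domain `E`. -/
noncomputable def perDensity {G : Type*} [Group G] (x : G → Bool) (Γ : Subgroup G)
    (E : Finset G) : ℝ :=
  (((E : Set G) ∩ perSet x Γ).ncard : ℝ) / (E.card : ℝ)

/-- The regularity constant `𝒟(x)`. -/
noncomputable def regConst {G : Type*} [Group G] (x : G → Bool) : ℝ :=
  sSup { r : ℝ | ∃ (Γ : Subgroup G) (E : Finset G),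
    Γ.FiniteIndex ∧ IsFundDom Γ E ∧ r = perDensity x Γ E }

section AuxLemmas


variable {G : Type*} {H : Type*}

/-- Uniform modulus of continuity for `(t, h) ↦ f (t * h)` on a compact metric group. -/
lemma aux_unif_mod [MetricSpace H] [CompactSpace H] [Mul H] [ContinuousMul H]
    (f : H → ℝ) (hf : Continuous f) {δ : ℝ} (hδ : 0 < δ) :
    ∃ r > 0, ∀ t t' h : H, dist t t' < r → |f (t * h) - f (t' * h)| < δ := by
  have hF : Continuous (fun p : H × H => f (p.1 * p.2)) := hf.comp continuous_mul
  have hu : UniformContinuous (fun p : H × H => f (p.1 * p.2)) :=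
    CompactSpace.uniformContinuous_of_continuous hF
  rw [Metric.uniformContinuous_iff] at hu
  obtain ⟨r, hr, hm⟩ := hu δ hδ
  refine ⟨r, hr, fun t t' h hd => ?_⟩
  have : dist ((t, h) : H × H) (t', h) < r := by
    rw [Prod.dist_eq]
    simpa [dist_self] using (by simpa [max_eq_left dist_nonneg, dist_self] using hd : max (dist t t') (dist h h) < r)
  simpa [Real.dist_eq] using hm this

/-- A finite convex combination of left translates by elements of a dense subgroup image
which uniformly nearly averages `f`. -/
lemma aux_convex [Group H] [MetricSpace H] [IsTopologicalGroup H] [CompactSpace H]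
    [MeasurableSpace H] [BorelSpace H]
    (ν : Measure H) [ν.IsHaarMeasure] [IsProbabilityMeasure ν]
    (τ : G → H) (hd : DenseRange τ) (f : H → ℝ) (hf : Continuous f)
    {δ : ℝ} (hδ : 0 < δ) :
    ∃ (k : ℕ) (w : Fin k → ℝ) (g : Fin k → G), (∀ j, 0 ≤ w j) ∧ (∑ j, w j = 1) ∧
      ∀ h : H, ∑ j, w j * f (τ (g j) * h) ≤ (∫ t, f t ∂ν) + δ := by
  -- right invariance
  haveI hRI : ν.IsMulRightInvariant := by
    constructor
    intro g
    have : IsProbabilityMeasure (Measure.map (· * g) ν) :=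
      Measure.isProbabilityMeasure_map (measurable_mul_const g).aemeasurable
    exact Measure.isHaarMeasure_eq_of_isProbabilityMeasure _ ν
  obtain ⟨r, hr, hmod⟩ := aux_unif_mod f hf (half_pos hδ)
  -- finite cover by balls of radius r
  obtain ⟨t, ht⟩ := isCompact_univ.elim_finite_subcover (fun c : H => Metric.ball c r)
    (fun c => Metric.isOpen_ball) (fun h _ => mem_iUnion.2 ⟨h, Metric.mem_ball_self hr⟩)
  set l : List H := t.toList with hl
  set k : ℕ := l.length with hk
  set c : Fin k → H := fun j => l.get j with hc
  set B : ℕ → Set H := fun n => if h : n < k then Metric.ball (c ⟨n, h⟩) r else ∅ with hB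
  set D : ℕ → Set H := disjointed B with hD
  have hBm : ∀ n, MeasurableSet (B n) := by
    intro n
    by_cases h : n < k <;> simp [hB, h, Metric.isOpen_ball.measurableSet]
  have hDm : ∀ n, MeasurableSet (D n) := MeasurableSet.disjointed hBm
  have hDsub : ∀ n, D n ⊆ B n := disjointed_subset B
  have hDdisj : Pairwise (Function.onFun Disjoint D) := disjoint_disjointed B
  have hBunion : ⋃ n, B n = univ := by
    apply eq_univ_of_forall
    intro h
    have : h ∈ ⋃ c ∈ t, Metric.ball c r := ht (mem_univ h)
    obtain ⟨cc, hcc, hmem⟩ := mem_iUnion₂.1 this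
    have : cc ∈ l := by simpa [hl] using hcc
    obtain ⟨j, hj⟩ := List.mem_iff_get.1 this
    refine mem_iUnion.2 ⟨j, ?_⟩
    rw [← hj] at hmem
    simp only [hB]
    rw [dif_pos j.isLt]
    simpa [hc, List.get_eq_getElem] using hmem
  have hDunion : ⋃ n, D n = univ := by rw [hD, iUnion_disjointed, hBunion]
  have hDunionFin : ⋃ (j : Fin k), D j = univ := by
    apply eq_univ_of_forall
    intro h
    have : h ∈ ⋃ n, D n := hDunion ▸ mem_univ h
    obtain ⟨n, hn⟩ := mem_iUnion.1 this
    have hnk : n < k := by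
      by_contra hcon
      have := hDsub n hn
      simp [hB, hcon] at this
    exact mem_iUnion.2 ⟨⟨n, hnk⟩, hn⟩
  set w : Fin k → ℝ := fun j => (ν (D j)).toReal with hw
  -- pick group elements close to centers
  have hpick : ∀ j : Fin k, ∃ g : G, τ g ∈ Metric.ball (c j) r := fun j =>
    hd.exists_mem_open Metric.isOpen_ball ⟨c j, Metric.mem_ball_self hr⟩
  choose g hg using hpick
  have hw0 : ∀ j, 0 ≤ w j := fun j => ENNReal.toReal_nonneg
  have hfin : ∀ j : Fin k, ν (D j) ≠ ∞ := fun j => measure_ne_top ν _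
  have hDdisjFin : Pairwise (Function.onFun Disjoint fun j : Fin k => D ↑j) :=
    fun i j hij => hDdisj (fun h => hij (Fin.val_injective h))
  have hDmeas : ν (⋃ j : Fin k, D ↑j) = ∑ j : Fin k, ν (D ↑j) := by
    rw [measure_iUnion hDdisjFin (fun j : Fin k => hDm j), tsum_fintype]
  have hwsum : ∑ j, w j = 1 := by
    have h1 : ∑ j : Fin k, ν (D ↑j) = 1 := by
      rw [← hDmeas, hDunionFin, measure_univ]
    calc ∑ j, w j = (∑ j : Fin k, ν (D ↑j)).toReal := (ENNReal.toReal_sum (fun j _ => hfin j)).symm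
    _ = 1 := by rw [h1]; simp
  refine ⟨k, w, g, hw0, hwsum, fun h => ?_⟩
  -- integrability
  have hint : Integrable (fun s : H => f (s * h)) ν :=
    (hf.comp (continuous_mul_right h)).integrable_of_hasCompactSupport
      (HasCompactSupport.of_compactSpace _)
  have key : ∀ j : Fin k, w j * f (τ (g j) * h) ≤ (∫ s in D j, f (s * h) ∂ν) + δ * w j := by
    intro j
    have hj1 : w j * f (τ (g j) * h) = ∫ _ in D (j : ℕ), f (τ (g j) * h) ∂ν := by
      rw [setIntegral_const]; simp [hw, smul_eq_mul, measureReal_def]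
    have hptwise : ∀ s ∈ D (j : ℕ), f (τ (g j) * h) ≤ f (s * h) + δ := by
      intro s hs
      have hsB : s ∈ B (j : ℕ) := hDsub _ hs
      have hsb : s ∈ Metric.ball (c j) r := by
        simpa [hB, j.isLt] using hsB
      have h1 : |f (s * h) - f (c j * h)| < δ / 2 :=
        hmod _ _ _ (by simpa [Metric.mem_ball] using hsb)
      have h2 : |f (τ (g j) * h) - f (c j * h)| < δ / 2 :=
        hmod _ _ _ (by simpa [Metric.mem_ball] using hg j)
      have := abs_sub_abs_le_abs_sub (f (τ (g j) * h)) (f (c j * h))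
      rw [abs_sub_lt_iff] at h1 h2
      linarith [h1.1, h1.2, h2.1, h2.2]
    have hmono : ∫ _ in D (j : ℕ), f (τ (g j) * h) ∂ν ≤ ∫ s in D (j : ℕ), (f (s * h) + δ) ∂ν := by
      apply setIntegral_mono_on (integrableOn_const (measure_ne_top ν _))
        ((hint.add (integrable_const δ)).integrableOn) (hDm j) hptwise
    have hsplit : ∫ s in D (j : ℕ), (f (s * h) + δ) ∂ν
        = (∫ s in D (j : ℕ), f (s * h) ∂ν) + δ * w j := by
      rw [integral_add hint.integrableOn (integrable_const δ).integrableOn, setIntegral_const]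
      simp [hw, smul_eq_mul, mul_comm, measureReal_def]
    calc w j * f (τ (g j) * h) = ∫ _ in D (j : ℕ), f (τ (g j) * h) ∂ν := hj1
    _ ≤ ∫ s in D (j : ℕ), (f (s * h) + δ) ∂ν := hmono
    _ = (∫ s in D (j : ℕ), f (s * h) ∂ν) + δ * w j := hsplit
  have hsum : ∑ j : Fin k, ∫ s in D (j : ℕ), f (s * h) ∂ν = ∫ s, f (s * h) ∂ν := by
    have := integral_iUnion_fintype (f := fun s => f (s * h)) (μ := ν)
      (s := fun j : Fin k => D (j : ℕ)) (fun j => hDm j) hDdisjFin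
      (fun j => hint.integrableOn)
    rw [hDunionFin] at this
    rw [← this, setIntegral_univ]
  calc ∑ j, w j * f (τ (g j) * h)
      ≤ ∑ j : Fin k, ((∫ s in D (j : ℕ), f (s * h) ∂ν) + δ * w j) := Finset.sum_le_sum (fun j _ => key j)
    _ = (∫ s, f (s * h) ∂ν) + δ * ∑ j, w j := by
        rw [Finset.sum_add_distrib, hsum, ← Finset.mul_sum]
    _ = (∫ t, f t ∂ν) + δ := by rw [integral_mul_right_eq_self f h, hwsum, mul_one]

end AuxLemmas

/-- If `W` is a regular Borel window and `x`, `y` both satisfy the sandwich condition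
`x_{int(W)ξ⁻¹} ≤ · ≤ x_{Wξ⁻¹}`, then their Besicovitch pseudodistance vanishes. -/
theorem stmt_8 {G : Type*} [Group G] [Countable G] [Infinite G]
    {H : Type*} [Group H] [TopologicalSpace H] [IsTopologicalGroup H]
    [CompactSpace H] [TopologicalSpace.MetrizableSpace H] [MeasurableSpace H] [BorelSpace H]
    (ν : Measure H) [ν.IsHaarMeasure] [IsProbabilityMeasure ν]
    (τ : G →* H) (hinj : Function.Injective ⇑τ) (hdense : DenseRange ⇑τ)
    (F : ℕ → Finset G) (hF : IsFolner F)
    (W : Set H) (hWm : MeasurableSet W) (hreg : ν (frontier W) = 0)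
    (ξ : H) (x y : G → Bool)
    (hx : ∀ g : G, (τ g * ξ ∈ interior W → x g = true) ∧ (x g = true → τ g * ξ ∈ W))
    (hy : ∀ g : G, (τ g * ξ ∈ interior W → y g = true) ∧ (y g = true → τ g * ξ ∈ W)) :
    besicovitchDist F x y = 0 := by
  letI : MetricSpace H := TopologicalSpace.metrizableSpaceMetric H
  obtain ⟨hFne, hFol⟩ := hF
  have hcard : ∀ n, (0:ℝ) < ((F n).card : ℝ) := fun n => by
    exact_mod_cast Finset.card_pos.2 (hFne n)
  set a : ℕ → ℝ := fun n => (((F n).filter fun g => x g ≠ y g).card : ℝ) / ((F n).card : ℝ)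
    with ha
  rw [show besicovitchDist F x y = limsup a atTop from rfl]
  classical
  have ha0 : ∀ n, 0 ≤ a n := fun n => div_nonneg (by positivity) (by positivity)
  have ha1 : ∀ n, a n ≤ 1 := fun n => by
    rw [ha]
    rw [div_le_one (hcard n)]
    exact_mod_cast Finset.card_filter_le _ _
  have hfr : ∀ g : G, x g ≠ y g → τ g * ξ ∈ frontier W := by
    intro g hg
    have hkey : (τ g * ξ ∈ W) ∧ (τ g * ξ ∉ interior W) := by
      by_cases hxg : x g = true
      · have hyg : ¬ y g = true := fun h => hg (hxg.trans h.symm)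
        exact ⟨(hx g).2 hxg, fun hi => hyg ((hy g).1 hi)⟩
      · have hyg : y g = true := by
          cases hyv : y g
          · rw [Bool.not_eq_true] at hxg
            exact absurd (hxg.trans hyv.symm) hg
          · rfl
        exact ⟨(hy g).2 hyg, fun hi => hxg ((hx g).1 hi)⟩
    exact ⟨subset_closure hkey.1, hkey.2⟩
  have hbddabove : IsBoundedUnder (· ≤ ·) atTop a := isBoundedUnder_of ⟨1, ha1⟩
  have hcobdd : IsCoboundedUnder (· ≤ ·) atTop a :=
    (isBoundedUnder_of (⟨0, ha0⟩ : ∃ b, ∀ n, b ≤ a n) :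
      IsBoundedUnder (· ≥ ·) atTop a).isCoboundedUnder_le
  have hge : 0 ≤ limsup a atTop :=
    le_limsup_of_frequently_le (Frequently.of_forall ha0) hbddabove
  by_cases hKne : (frontier W).Nonempty
  swap
  · have haz : a = fun _ => (0:ℝ) := by
      funext n
      rw [ha]
      have : (F n).filter (fun g => x g ≠ y g) = ∅ := by
        apply Finset.filter_eq_empty_iff.2
        intro g _ hgxy
        exact hKne ⟨_, hfr g hgxy⟩
      simp [this]
    rw [haz, limsup_const]
  have hle : ∀ ε : ℝ, 0 < ε → limsup a atTop ≤ 0 + ε := by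
    intro ε hε
    set K := frontier W with hKdef
    -- choose a small thickening of the frontier with small measure
    have htend := tendsto_measure_cthickening_of_isClosed (μ := ν) (s := K)
      ⟨1, one_pos, measure_ne_top ν _⟩ isClosed_frontier
    rw [hreg] at htend
    have h2 : (0:ℝ≥0∞) < ENNReal.ofReal (ε/2) := ENNReal.ofReal_pos.2 (by linarith)
    have hev : ∀ᶠ r in 𝓝[>] (0:ℝ), ν (Metric.cthickening r K) < ENNReal.ofReal (ε/2) :=
      (htend.mono_left nhdsWithin_le_nhds).eventually_lt_const h2
    obtain ⟨r, hrν, hrpos⟩ := (hev.and self_mem_nhdsWithin).exists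

    -- the bump function
    set f : H → ℝ := fun h => max (1 - Metric.infDist h K / r) 0 with hfdef
    have hfc : Continuous f :=
      (continuous_const.sub ((Metric.continuous_infDist_pt K).div_const r)).max continuous_const
    have hf0 : ∀ h, 0 ≤ f h := fun h => le_max_right _ _
    have hf1 : ∀ h, f h ≤ 1 := by
      intro h
      have h1 : 0 ≤ Metric.infDist h K / r := div_nonneg Metric.infDist_nonneg hrpos.le
      exact max_le (by linarith) zero_le_one
    have hfK : ∀ h ∈ K, f h = 1 := fun h hh => by
      simp [hfdef, Metric.infDist_zero_of_mem hh]
    have hfsupp : ∀ h, h ∉ Metric.thickening r K → f h = 0 := by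
      intro h hh
      rw [Metric.mem_thickening_iff_infDist_lt hKne] at hh
      have h1 : 1 - Metric.infDist h K / r ≤ 0 := by
        rw [sub_nonpos]
        exact (one_le_div hrpos).2 (not_lt.mp hh)
      simp [hfdef, max_eq_right h1]
    have hfint : Integrable f ν :=
      hfc.integrable_of_hasCompactSupport (HasCompactSupport.of_compactSpace _)
    have hintle : (∫ t, f t ∂ν) ≤ (ν (Metric.cthickening r K)).toReal := by
      have hind : ∀ h, f h ≤ (Metric.cthickening r K).indicator (fun _ => (1:ℝ)) h := by
        intro h
        by_cases hh : h ∈ Metric.cthickening r K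
        · rw [Set.indicator_of_mem hh]; exact hf1 h
        · rw [Set.indicator_of_notMem hh, hfsupp h
            (fun hc => hh (Metric.thickening_subset_cthickening _ _ hc))]
      have hindint : Integrable ((Metric.cthickening r K).indicator (fun _ => (1:ℝ))) ν :=
        (integrable_const (1:ℝ)).indicator Metric.isClosed_cthickening.measurableSet
      calc ∫ t, f t ∂ν ≤ ∫ t, (Metric.cthickening r K).indicator (fun _ => (1:ℝ)) t ∂ν :=
            integral_mono hfint hindint hind
        _ = (ν (Metric.cthickening r K)).toReal :=
            integral_indicator_one Metric.isClosed_cthickening.measurableSet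
    have hintlt : (∫ t, f t ∂ν) < ε/2 :=
      lt_of_le_of_lt hintle (ENNReal.toReal_lt_of_lt_ofReal hrν)
    -- the convex combination of translates
    obtain ⟨k, w, u, hw0, hwsum, hkey⟩ := aux_convex ν (⇑τ) hdense f hfc (half_pos hε)
    set M : ℝ := (∫ t, f t ∂ν) + ε/2 with hM
    set b : ℕ → ℝ := fun n => (∑ g ∈ F n, f (τ g * ξ)) / ((F n).card : ℝ) with hb
    have hab : ∀ n, a n ≤ b n := by
      intro n
      rw [ha, hb]
      refine div_le_div_of_nonneg_right ?_ (hcard n).le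
      rw [Finset.natCast_card_filter]
      apply Finset.sum_le_sum
      intro g _
      by_cases hgxy : x g ≠ y g
      · rw [if_pos hgxy]
        exact (hfK _ (hfr g hgxy)).ge
      · rw [if_neg hgxy]
        exact hf0 _
    -- comparison with translated sums
    have htrans : ∀ (j : Fin k) (n : ℕ), (∑ g ∈ F n, f (τ g * ξ))
        ≤ (∑ g ∈ F n, f (τ (u j) * (τ g * ξ)))
          + ((((F n).image fun h => u j * h) ∆ F n).card : ℝ) := by
      intro j n
      set S := F n with hS
      set T := S.image (fun h => u j * h) with hT
      have hTsum : ∑ g' ∈ T, f (τ g' * ξ) = ∑ g' ∈ S, f (τ (u j) * (τ g' * ξ)) := by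
        rw [hT, Finset.sum_image (by intro p _ q _ hpq; exact mul_left_cancel hpq)]
        apply Finset.sum_congr rfl
        intro g' _
        rw [map_mul, mul_assoc]
      have h0 : ∑ g' ∈ S, f (τ g' * ξ)
          = ∑ g' ∈ S \ T, f (τ g' * ξ) + ∑ g' ∈ S ∩ T, f (τ g' * ξ) := by
        rw [← Finset.sum_sdiff (Finset.inter_subset_left (s₂ := T)), Finset.sdiff_inter_self_left]
      have h1 : ∑ g' ∈ S ∩ T, f (τ g' * ξ) ≤ ∑ g' ∈ T, f (τ g' * ξ) :=
        Finset.sum_le_sum_of_subset_of_nonneg Finset.inter_subset_right (fun i _ _ => hf0 _)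
      have h2 : ∑ g' ∈ S \ T, f (τ g' * ξ) ≤ ((S \ T).card : ℝ) := by
        have := Finset.sum_le_card_nsmul (S \ T) (fun g' => f (τ g' * ξ)) 1
          (fun g' _ => hf1 _)
        simpa using this
      have h3 : ((S \ T).card : ℝ) ≤ ((T ∆ S).card : ℝ) := by
        have hsub : S \ T ⊆ T ∆ S := by
          intro i hi
          rw [Finset.mem_sdiff] at hi
          rw [Finset.mem_symmDiff]
          exact Or.inr ⟨hi.1, hi.2⟩
        exact_mod_cast Finset.card_le_card hsub
      calc ∑ g' ∈ S, f (τ g' * ξ)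
          = ∑ g' ∈ S \ T, f (τ g' * ξ) + ∑ g' ∈ S ∩ T, f (τ g' * ξ) := h0
        _ ≤ ((T ∆ S).card : ℝ) + ∑ g' ∈ T, f (τ g' * ξ) := by
            have := h2.trans h3
            linarith
        _ = (∑ g' ∈ S, f (τ (u j) * (τ g' * ξ))) + ((T ∆ S).card : ℝ) := by
            rw [hTsum]; ring
    set d : Fin k → ℕ → ℝ := fun j n =>
      (((((F n).image fun h => u j * h) ∆ F n).card : ℝ)) / ((F n).card : ℝ) with hd
    have hble : ∀ n, b n ≤ M + ∑ j, w j * d j n := by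
      intro n
      set q : ℝ := ((F n).card : ℝ) with hq
      set C : ℝ := ∑ g ∈ F n, f (τ g * ξ) with hC
      set Dc : Fin k → ℝ := fun j => ((((F n).image fun h => u j * h) ∆ F n).card : ℝ) with hDc
      have hCle : C ≤ q * M + ∑ j, w j * Dc j := by
        have h1 : C = ∑ j, w j * C := by rw [← Finset.sum_mul, hwsum, one_mul]
        have h2 : ∀ j : Fin k, w j * C
            ≤ w j * (∑ g ∈ F n, f (τ (u j) * (τ g * ξ))) + w j * Dc j := by
          intro j
          have := mul_le_mul_of_nonneg_left (htrans j n) (hw0 j)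
          rw [mul_add] at this
          exact this
        have h3 : ∑ j : Fin k, w j * (∑ g ∈ F n, f (τ (u j) * (τ g * ξ))) ≤ q * M := by
          have hswap : ∑ j : Fin k, w j * (∑ g ∈ F n, f (τ (u j) * (τ g * ξ)))
              = ∑ g ∈ F n, ∑ j : Fin k, w j * f (τ (u j) * (τ g * ξ)) := by
            rw [Finset.sum_comm]
            apply Finset.sum_congr rfl
            intro j _
            rw [Finset.mul_sum]
          rw [hswap]
          calc ∑ g ∈ F n, ∑ j : Fin k, w j * f (τ (u j) * (τ g * ξ))
              ≤ ∑ _g ∈ F n, M := Finset.sum_le_sum (fun g _ => hkey (τ g * ξ))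
            _ = q * M := by rw [Finset.sum_const, hq]; simp [nsmul_eq_mul]
        calc C = ∑ j, w j * C := h1
          _ ≤ ∑ j : Fin k, (w j * (∑ g ∈ F n, f (τ (u j) * (τ g * ξ))) + w j * Dc j) :=
              Finset.sum_le_sum (fun j _ => h2 j)
          _ = (∑ j : Fin k, w j * (∑ g ∈ F n, f (τ (u j) * (τ g * ξ)))) + ∑ j, w j * Dc j :=
              Finset.sum_add_distrib
          _ ≤ q * M + ∑ j, w j * Dc j := by linarith [h3]
      have hq0 : (0:ℝ) < q := hcard n
      have hbn : b n = C / q := rfl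
      rw [hbn]
      rw [div_le_iff₀ hq0]
      have hdq : ∀ j : Fin k, d j n = Dc j / q := fun j => rfl
      have : (M + ∑ j, w j * d j n) * q = q * M + ∑ j, w j * Dc j := by
        rw [add_mul, Finset.sum_mul]
        congr 1
        · ring
        · apply Finset.sum_congr rfl
          intro j _
          rw [hdq j, mul_assoc, div_mul_cancel₀ _ (ne_of_gt hq0)]
      rw [this]
      exact hCle
    have he : Tendsto (fun n => ∑ j, w j * d j n) atTop (𝓝 0) := by
      have h1 : Tendsto (fun n => ∑ j : Fin k, w j * d j n) atTop
          (𝓝 (∑ j : Fin k, w j * 0)) := by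
        apply tendsto_finset_sum
        intro j _
        simp only [hd]
        exact (hFol (u j)).const_mul (w j)
      simpa using h1
    have hlimb : Tendsto (fun n => M + ∑ j, w j * d j n) atTop (𝓝 M) := by
      have := tendsto_const_nhds (x := M) (f := atTop (α := ℕ)) |>.add he
      simpa using this
    have hfinal : limsup a atTop ≤ M := by
      rw [← hlimb.limsup_eq]
      exact limsup_le_limsup (Eventually.of_forall (fun n => (hab n).trans (hble n))) hcobdd
        hlimb.isBoundedUnder_le
    rw [hM] at hfinal
    linarith
  have hfin := le_of_forall_pos_le_add hle
  linarith
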